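/- Let σ be a positive semidefinite operator on a finite-dimensional complex Hilbert space, let α ∈ (0,1) with conjugate index α' = α/(α−1) < 0, and let X, Y be positive semidefinite operators with supp(σ) ⊆ supp(Y). Then ⟨X, Y⟩_σ ≥ ‖X‖_{α,σ} · ‖Y‖_{α',σ} (reverse Hölder inequality), where the negative powers appearing in ‖Y‖_{α',σ} are taken on the relevant supports (Moore–Penrose convention). -/

import Mathlib

open Matrix
open scoped ComplexOrder Kronecker

noncomputable section

/-- Real power of a Hermitian matrix via functional calculus on its support
(Moore–Penrose convention, also for negative powers); junk value `0` for
non-Hermitian input. -/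
def Matrix.rpowH {ι : Type*} [Fintype ι] [DecidableEq ι] (A : Matrix ι ι ℂ) (p : ℝ) :
    Matrix ι ι ℂ :=
  if hA : A.IsHermitian then
    (hA.eigenvectorUnitary : Matrix ι ι ℂ) *
      Matrix.diagonal (fun i => ((hA.eigenvalues i ^ p : ℝ) : ℂ)) *
      star (hA.eigenvectorUnitary : Matrix ι ι ℂ)
  else 0

/-- The operator absolute value `|A| = (A† A)^(1/2)`. -/
def Matrix.absM {ι : Type*} [Fintype ι] [DecidableEq ι] (A : Matrix ι ι ℂ) :
    Matrix ι ι ℂ :=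
  Matrix.rpowH (Aᴴ * A) (2⁻¹ : ℝ)

/-- Real part of the trace. -/
def retr {ι : Type*} [Fintype ι] (A : Matrix ι ι ℂ) : ℝ :=
  (Matrix.trace A).re

/-- The σ-weighted `p`-(quasi)norm `‖X‖_{p,σ} = (Tr[|σ^{1/(2p)} X σ^{1/(2p)}|^p])^{1/p}`. -/
def wNorm {ι : Type*} [Fintype ι] [DecidableEq ι]
    (p : ℝ) (σ X : Matrix ι ι ℂ) : ℝ :=
  (retr (Matrix.rpowH
    (Matrix.absM (Matrix.rpowH σ (1 / (2 * p)) * X * Matrix.rpowH σ (1 / (2 * p)))) p))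
    ^ (1 / p)

/-- The Kubo–Martin–Schwinger σ-weighted inner product
`⟨X, Y⟩_σ = Tr[X† σ^{1/2} Y σ^{1/2}]` (its real part; it is real for the
operators considered here). -/
def kmsInner {ι : Type*} [Fintype ι] [DecidableEq ι]
    (σ X Y : Matrix ι ι ℂ) : ℝ :=
  retr (Xᴴ * Matrix.rpowH σ (2⁻¹ : ℝ) * Y * Matrix.rpowH σ (2⁻¹ : ℝ))

namespace RevHolderAux

variable {ι : Type*} [Fintype ι] [DecidableEq ι]

/-- Functional calculus w.r.t. the eigendecomposition chosen by `hA`. -/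
def fc {A : Matrix ι ι ℂ} (hA : A.IsHermitian) (f : ι → ℝ) : Matrix ι ι ℂ :=
  (hA.eigenvectorUnitary : Matrix ι ι ℂ) * Matrix.diagonal (fun i => ((f i : ℝ) : ℂ)) *
    star (hA.eigenvectorUnitary : Matrix ι ι ℂ)

lemma star_mul_self_eigen {A : Matrix ι ι ℂ} (hA : A.IsHermitian) :
    star (hA.eigenvectorUnitary : Matrix ι ι ℂ) * (hA.eigenvectorUnitary : Matrix ι ι ℂ) = 1 :=
  Unitary.coe_star_mul_self hA.eigenvectorUnitary

lemma mul_star_self_eigen {A : Matrix ι ι ℂ} (hA : A.IsHermitian) :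
    (hA.eigenvectorUnitary : Matrix ι ι ℂ) * star (hA.eigenvectorUnitary : Matrix ι ι ℂ) = 1 :=
  Unitary.coe_mul_star_self hA.eigenvectorUnitary

lemma rpowH_eq {A : Matrix ι ι ℂ} (hA : A.IsHermitian) (p : ℝ) :
    A.rpowH p = fc hA (fun i => hA.eigenvalues i ^ p) := by
  rw [Matrix.rpowH, dif_pos hA]; rfl

lemma fc_eigen_self {A : Matrix ι ι ℂ} (hA : A.IsHermitian) : fc hA hA.eigenvalues = A := by
  rw [fc]
  exact (hA.spectral_theorem).symm

lemma fc_mul {A : Matrix ι ι ℂ} (hA : A.IsHermitian) (f g : ι → ℝ) :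
    fc hA f * fc hA g = fc hA (fun i => f i * g i) := by
  rw [fc, fc, fc]
  simp only [Matrix.mul_assoc]
  rw [← Matrix.mul_assoc (star (hA.eigenvectorUnitary : Matrix ι ι ℂ))
      (hA.eigenvectorUnitary : Matrix ι ι ℂ), star_mul_self_eigen hA, Matrix.one_mul,
    ← Matrix.mul_assoc (Matrix.diagonal _) (Matrix.diagonal _), Matrix.diagonal_mul_diagonal]
  norm_cast

lemma fc_conjTranspose {A : Matrix ι ι ℂ} (hA : A.IsHermitian) (f : ι → ℝ) :
    (fc hA f)ᴴ = fc hA f := by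
  have hD : star (Matrix.diagonal fun i => ((f i : ℝ) : ℂ))
      = Matrix.diagonal fun i => ((f i : ℝ) : ℂ) := by
    ext i j
    by_cases h : i = j
    · subst h
      simp [Matrix.star_apply, Matrix.diagonal_apply_eq, Complex.star_def, Complex.conj_ofReal]
    · simp [Matrix.star_apply, Matrix.diagonal_apply_ne _ h, Matrix.diagonal_apply_ne _ (Ne.symm h)]
  rw [fc, ← Matrix.star_eq_conjTranspose]
  simp only [StarMul.star_mul, star_star, hD, Matrix.mul_assoc]

lemma fc_posSemidef {A : Matrix ι ι ℂ} (hA : A.IsHermitian) {f : ι → ℝ}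
    (hf : ∀ i, 0 ≤ f i) : (fc hA f).PosSemidef := by
  have h : (Matrix.diagonal (fun i => ((f i : ℝ) : ℂ))).PosSemidef := by
    refine Matrix.posSemidef_diagonal_iff.mpr fun i => ?_
    exact_mod_cast hf i
  have := h.mul_mul_conjTranspose_same (hA.eigenvectorUnitary : Matrix ι ι ℂ)
  rwa [← Matrix.star_eq_conjTranspose] at this

lemma trace_fc {A : Matrix ι ι ℂ} (hA : A.IsHermitian) (f : ι → ℝ) :
    (fc hA f).trace = ((∑ i, f i : ℝ) : ℂ) := by
  rw [fc, Matrix.trace_mul_cycle, star_mul_self_eigen hA, Matrix.one_mul,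
    Matrix.trace_diagonal]
  push_cast
  rfl

lemma diag_mulVec (d : ι → ℂ) (w : ι → ℂ) :
    Matrix.diagonal d *ᵥ w = fun i => d i * w i := by
  funext i
  simp [Matrix.mulVec, dotProduct, Matrix.diagonal_apply, ite_mul]

lemma mulVec_col (A B : Matrix ι ι ℂ) (j : ι) :
    A *ᵥ (fun k => B k j) = fun k => (A * B) k j := by
  funext k
  simp [Matrix.mulVec, dotProduct, Matrix.mul_apply]

lemma fc_mulVec_eq_zero_iff {A : Matrix ι ι ℂ} (hA : A.IsHermitian) (f : ι → ℝ) (v : ι → ℂ) :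
    fc hA f *ᵥ v = 0 ↔
      ∀ i, ((f i : ℝ) : ℂ) * ((star (hA.eigenvectorUnitary : Matrix ι ι ℂ) *ᵥ v) i) = 0 := by
  set U : Matrix ι ι ℂ := (hA.eigenvectorUnitary : Matrix ι ι ℂ) with hU
  have hexp : fc hA f *ᵥ v
      = U *ᵥ (Matrix.diagonal (fun i => ((f i : ℝ) : ℂ)) *ᵥ (star U *ᵥ v)) := by
    rw [fc, Matrix.mulVec_mulVec, Matrix.mulVec_mulVec]
  constructor
  · intro h i
    have h2 : star U *ᵥ (fc hA f *ᵥ v) = 0 := by rw [h, Matrix.mulVec_zero]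
    rw [hexp, Matrix.mulVec_mulVec, star_mul_self_eigen hA, Matrix.one_mulVec,
      diag_mulVec] at h2
    exact congrFun h2 i
  · intro h
    rw [hexp, diag_mulVec]
    have : (fun i => ((f i : ℝ) : ℂ) * ((star U *ᵥ v) i)) = (0 : ι → ℂ) := funext h
    rw [this, Matrix.mulVec_zero]

lemma fc_ker_mono {A : Matrix ι ι ℂ} (hA : A.IsHermitian) {f g : ι → ℝ}
    (hfg : ∀ i, f i = 0 → g i = 0) {v : ι → ℂ} (hv : fc hA f *ᵥ v = 0) :
    fc hA g *ᵥ v = 0 := by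
  rw [fc_mulVec_eq_zero_iff] at hv ⊢
  intro i
  rcases mul_eq_zero.mp (hv i) with h | h
  · have : f i = 0 := by exact_mod_cast h
    rw [hfg i this]
    simp
  · exact mul_eq_zero_of_right _ h

lemma psd_mulVec_eq_zero {Y : Matrix ι ι ℂ} (hY : Y.PosSemidef) {u : ι → ℂ}
    (h : star u ⬝ᵥ (Y *ᵥ u) = 0) : Y *ᵥ u = 0 := by
  exact (hY.dotProduct_mulVec_zero_iff u).mp h

set_option linter.unusedSectionVars false

lemma rpowH_posSemidef {σ : Matrix ι ι ℂ} (hσ : σ.PosSemidef) (p : ℝ) :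
    (σ.rpowH p).PosSemidef := by
  rw [rpowH_eq hσ.1]
  exact fc_posSemidef hσ.1 fun i => Real.rpow_nonneg (hσ.eigenvalues_nonneg i) p

lemma psd_conj {X S : Matrix ι ι ℂ} (hX : X.PosSemidef) (hS : S.IsHermitian) :
    (S * X * S).PosSemidef := by
  have := hX.mul_mul_conjTranspose_same S
  rwa [hS.eq] at this

lemma absM_of_posSemidef {M : Matrix ι ι ℂ} (hM : M.PosSemidef) : M.absM = M := by
  rw [Matrix.absM]
  have hB : (Mᴴ * M).PosSemidef := Matrix.posSemidef_conjTranspose_mul_self M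
  have hR : (Matrix.rpowH (Mᴴ * M) (2⁻¹ : ℝ)).PosSemidef := rpowH_posSemidef hB _
  open scoped MatrixOrder Matrix.Norms.L2Operator in
  refine (CFC.sq_eq_sq_iff (A := Matrix ι ι ℂ) _ _ hR.nonneg hM.nonneg).mp ?_
  rw [pow_two, pow_two, rpowH_eq hB.1, fc_mul]
  have h1 : (fun i => hB.1.eigenvalues i ^ (2⁻¹ : ℝ) * hB.1.eigenvalues i ^ (2⁻¹ : ℝ))
      = hB.1.eigenvalues := by
    funext i
    rw [← Real.rpow_add' (hB.eigenvalues_nonneg i) (by norm_num)]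
    norm_num
  rw [h1, fc_eigen_self, hM.1.eq]

lemma retr_rpowH {M : Matrix ι ι ℂ} (hM : M.PosSemidef) (p : ℝ) :
    retr (M.rpowH p) = ∑ i, hM.1.eigenvalues i ^ p := by
  rw [retr, rpowH_eq hM.1, trace_fc, Complex.ofReal_re]

lemma trace_quad (a b : ι → ℂ) (P : Matrix ι ι ℂ) :
    (Matrix.diagonal a * P * Matrix.diagonal b * Pᴴ).trace
      = ∑ i, ∑ j, a i * b j * (P i j * star (P i j)) := by
  rw [Matrix.trace]
  refine Finset.sum_congr rfl fun i _ => ?_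
  rw [Matrix.diag]
  rw [Matrix.mul_apply]
  refine Finset.sum_congr rfl fun j _ => ?_
  rw [Matrix.mul_diagonal, Matrix.diagonal_mul, Matrix.conjTranspose_apply]
  ring

lemma trace_conj_pair (U V A B : Matrix ι ι ℂ) (hU : U * star U = 1)
    (hU' : star U * U = 1) :
    ((U * A * star U) * (V * B * star V)).trace
      = (A * (star U * V) * B * (star U * V)ᴴ).trace := by
  have h : (U * A * star U) * (V * B * star V)
      = U * (A * (star U * V) * B * (star U * V)ᴴ) * star U := by
    rw [← Matrix.star_eq_conjTranspose]
    simp only [StarMul.star_mul, star_star, Matrix.mul_assoc]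
    rw [hU, Matrix.mul_one]
  rw [h, Matrix.trace_mul_cycle, ← Matrix.mul_assoc, hU', Matrix.one_mul]

lemma trace_fc_mul_fc {A B : Matrix ι ι ℂ} (hA : A.IsHermitian) (hB : B.IsHermitian)
    (f g : ι → ℝ) :
    (fc hA f * fc hB g).trace
      = ((∑ i, ∑ j, f i * g j * Complex.normSq
          ((star (hA.eigenvectorUnitary : Matrix ι ι ℂ)
            * (hB.eigenvectorUnitary : Matrix ι ι ℂ)) i j) : ℝ) : ℂ) := by
  rw [fc, fc, trace_conj_pair _ _ _ _ (mul_star_self_eigen hA) (star_mul_self_eigen hA),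
    trace_quad]
  push_cast
  refine Finset.sum_congr rfl fun i _ => Finset.sum_congr rfl fun j _ => ?_
  rw [RCLike.star_def, Complex.mul_conj]

lemma fc_mul_eigen {A : Matrix ι ι ℂ} (hA : A.IsHermitian) (f : ι → ℝ) :
    fc hA f * (hA.eigenvectorUnitary : Matrix ι ι ℂ)
      = (hA.eigenvectorUnitary : Matrix ι ι ℂ) * Matrix.diagonal (fun i => ((f i : ℝ) : ℂ)) := by
  rw [fc]
  simp only [Matrix.mul_assoc]
  rw [star_mul_self_eigen hA, Matrix.mul_one]

/-- columns of the eigenvector unitary are eigenvectors of `fc`. -/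
lemma fc_mulVec_col {A : Matrix ι ι ℂ} (hA : A.IsHermitian) (f : ι → ℝ) (j : ι) :
    fc hA f *ᵥ (fun k => (hA.eigenvectorUnitary : Matrix ι ι ℂ) k j)
      = ((f j : ℝ) : ℂ) • (fun k => (hA.eigenvectorUnitary : Matrix ι ι ℂ) k j) := by
  rw [mulVec_col, fc_mul_eigen]
  funext k
  rw [Matrix.mul_diagonal]
  simp [mul_comm]

lemma row_sum (P : Matrix ι ι ℂ) (h : P * Pᴴ = 1) (i : ι) :
    ∑ j, Complex.normSq (P i j) = 1 := by
  have h1 : (P * Pᴴ) i i = 1 := by rw [h, Matrix.one_apply_eq]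
  rw [Matrix.mul_apply] at h1
  have h2 : ∑ j, ((Complex.normSq (P i j) : ℝ) : ℂ) = 1 := by
    refine Eq.trans ?_ h1
    refine Finset.sum_congr rfl fun j _ => ?_
    rw [Matrix.conjTranspose_apply, RCLike.star_def, Complex.mul_conj]
  exact_mod_cast h2

lemma col_sum (P : Matrix ι ι ℂ) (h : Pᴴ * P = 1) (j : ι) :
    ∑ i, Complex.normSq (P i j) = 1 := by
  have h1 : (Pᴴ * P) j j = 1 := by rw [h, Matrix.one_apply_eq]
  rw [Matrix.mul_apply] at h1
  have h2 : ∑ i, ((Complex.normSq (P i j) : ℝ) : ℂ) = 1 := by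
    refine Eq.trans ?_ h1
    refine Finset.sum_congr rfl fun i _ => ?_
    rw [Matrix.conjTranspose_apply, RCLike.star_def, mul_comm, Complex.mul_conj]
  exact_mod_cast h2

lemma mul_star_unitary {U V : Matrix ι ι ℂ} (hU : star U * U = 1) (hV : V * star V = 1) :
    (star U * V) * (star U * V)ᴴ = 1 := by
  rw [← Matrix.star_eq_conjTranspose, StarMul.star_mul, star_star,
    Matrix.mul_assoc, ← Matrix.mul_assoc V (star V) U, hV, Matrix.one_mul, hU]

lemma star_mul_unitary {U V : Matrix ι ι ℂ} (hU : U * star U = 1) (hV : star V * V = 1) :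
    (star U * V)ᴴ * (star U * V) = 1 := by
  rw [← Matrix.star_eq_conjTranspose, StarMul.star_mul, star_star,
    Matrix.mul_assoc, ← Matrix.mul_assoc U (star U) V, hU, Matrix.one_mul, hV]

/-- the scalar Young-type step. -/
lemma scalar_step {α α' t lam mu : ℝ} (hα0 : 0 < α) (hα1 : α < 1)
    (hα' : α' = α / (α - 1)) (ht : 0 < t) (hlam : 0 ≤ lam) (hmu : 0 < mu) :
    lam ^ α ≤ α * (t * (lam * mu)) + (1 - α) * (t ^ (-(α / (1 - α))) * mu ^ α') := by
  have h1α : (0:ℝ) < 1 - α := by linarith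
  have hp1 : (t * (lam * mu)) ^ α = t ^ α * (lam ^ α * mu ^ α) := by
    rw [Real.mul_rpow ht.le (mul_nonneg hlam hmu.le), Real.mul_rpow hlam hmu.le]
  have hp2 : (t ^ (-(α / (1 - α))) * mu ^ α') ^ (1 - α) = t ^ (-α) * mu ^ (-α) := by
    rw [Real.mul_rpow (Real.rpow_nonneg ht.le _) (Real.rpow_nonneg hmu.le _),
      ← Real.rpow_mul ht.le, ← Real.rpow_mul hmu.le]
    congr 1
    · congr 1
      field_simp
    · congr 1
      rw [hα']
      have : α - 1 ≠ 0 := by intro h; linarith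
      field_simp
      ring
  have htt : t ^ α * t ^ (-α) = 1 := by
    rw [← Real.rpow_add ht]; simp
  have hmm : mu ^ α * mu ^ (-α) = 1 := by
    rw [← Real.rpow_add hmu]; simp
  have hkeyeq : lam ^ α = (t * (lam * mu)) ^ α * (t ^ (-(α / (1 - α))) * mu ^ α') ^ (1 - α) := by
    rw [hp1, hp2]
    calc lam ^ α = (t ^ α * t ^ (-α)) * ((mu ^ α * mu ^ (-α)) * lam ^ α) := by
          rw [htt, hmm]; ring
      _ = t ^ α * (lam ^ α * mu ^ α) * (t ^ (-α) * mu ^ (-α)) := by ring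
  rw [hkeyeq]
  exact Real.geom_mean_le_arith_mean2_weighted hα0.le h1α.le
    (by positivity) (by positivity) (by ring)

/-- pure real-analysis core: reverse Hölder for doubly stochastically coupled
nonnegative vectors. -/
lemma reverse_holder_sums {ι : Type*} [Fintype ι]
    (lam mu : ι → ℝ) (D : ι → ι → ℝ)
    (hlam : ∀ i, 0 ≤ lam i) (hmu : ∀ j, 0 ≤ mu j) (hD : ∀ i j, 0 ≤ D i j)
    (hrow : ∀ i, ∑ j, D i j = 1) (hcol : ∀ j, ∑ i, D i j = 1)
    (hkill : ∀ j, mu j = 0 → ∀ i, lam i * D i j = 0)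
    (α : ℝ) (hα0 : 0 < α) (hα1 : α < 1) (α' : ℝ) (hα' : α' = α / (α - 1)) :
    (∑ i, lam i ^ α) ^ (1/α) * (∑ j, mu j ^ α') ^ (1/α')
      ≤ ∑ i, ∑ j, lam i * mu j * D i j := by
  have hαne : α ≠ 0 := ne_of_gt hα0
  have h1α : (0:ℝ) < 1 - α := by linarith
  have hα'neg : α' < 0 := by
    rw [hα']; exact div_neg_of_pos_of_neg hα0 (by linarith)
  have hα'ne : α' ≠ 0 := ne_of_lt hα'neg
  set S := ∑ i, lam i ^ α with hSdef
  set R := ∑ j, mu j ^ α' with hRdef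
  set T := ∑ i, ∑ j, lam i * mu j * D i j with hTdef
  have hT0 : 0 ≤ T := Finset.sum_nonneg fun i _ => Finset.sum_nonneg fun j _ =>
    mul_nonneg (mul_nonneg (hlam i) (hmu j)) (hD i j)
  have hS0 : 0 ≤ S := Finset.sum_nonneg fun i _ => Real.rpow_nonneg (hlam i) α
  have hR0 : 0 ≤ R := Finset.sum_nonneg fun j _ => Real.rpow_nonneg (hmu j) α'
  have hkill' : ∀ j, mu j = 0 → ∀ i, lam i ^ α * D i j = 0 := by
    intro j hj i
    rcases mul_eq_zero.mp (hkill j hj i) with h | h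
    · rw [h, Real.zero_rpow hαne, zero_mul]
    · rw [h, mul_zero]
  have hSD : S = ∑ i, ∑ j, lam i ^ α * D i j := by
    refine Finset.sum_congr rfl fun i _ => ?_
    rw [← Finset.mul_sum, hrow i, mul_one]
  rcases eq_or_lt_of_le hR0 with hR0' | hRpos
  · -- R = 0
    have hmu0 : ∀ j, mu j = 0 := by
      intro j
      have h := (Finset.sum_eq_zero_iff_of_nonneg
        (fun j _ => Real.rpow_nonneg (hmu j) α')).mp hR0'.symm j (Finset.mem_univ j)
      exact (Real.rpow_eq_zero (hmu j) hα'ne).mp h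
    have hSzero : S = 0 := by
      rw [hSD]
      exact Finset.sum_eq_zero fun i _ => Finset.sum_eq_zero fun j _ => hkill' j (hmu0 j) i
    rw [hSzero, ← hR0', Real.zero_rpow (one_div_ne_zero hαne), zero_mul]
    exact hT0
  · -- R > 0
    suffices key : S ≤ T ^ α * R ^ (1 - α) by
      have step1 : S ^ (1/α) ≤ (T ^ α * R ^ (1-α)) ^ (1/α) :=
        Real.rpow_le_rpow hS0 key (by positivity)
      have step2 : (T ^ α * R ^ (1-α)) ^ (1/α) = T * R ^ ((1-α)/α) := by
        rw [Real.mul_rpow (Real.rpow_nonneg hT0 α) (Real.rpow_nonneg hR0 _),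
          ← Real.rpow_mul hT0, ← Real.rpow_mul hR0, mul_one_div, div_self hαne,
          Real.rpow_one, mul_one_div]
      have hexp0 : (1-α)/α + 1/α' = 0 := by
        rw [hα']
        have h1 : α - 1 ≠ 0 := by intro h; linarith
        field_simp
        ring
      calc S ^ (1/α) * R ^ (1/α')
          ≤ (T * R ^ ((1-α)/α)) * R ^ (1/α') := by
            exact mul_le_mul_of_nonneg_right (step1.trans_eq step2)
              (Real.rpow_nonneg hR0 _)
        _ = T * (R ^ ((1-α)/α) * R ^ (1/α')) := by ring
        _ = T * R ^ ((1-α)/α + 1/α') := by rw [← Real.rpow_add hRpos]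
        _ = T := by rw [hexp0, Real.rpow_zero, mul_one]
    rcases eq_or_lt_of_le hT0 with hT0' | hTpos
    · -- T = 0
      have hterm : ∀ i j, lam i * mu j * D i j = 0 := by
        intro i j
        have houter := (Finset.sum_eq_zero_iff_of_nonneg
          (fun i _ => Finset.sum_nonneg fun j _ =>
            mul_nonneg (mul_nonneg (hlam i) (hmu j)) (hD i j))).mp hT0'.symm i
          (Finset.mem_univ i)
        exact (Finset.sum_eq_zero_iff_of_nonneg
          (fun j _ => mul_nonneg (mul_nonneg (hlam i) (hmu j)) (hD i j))).mp houter j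
          (Finset.mem_univ j)
      have hSzero : S = 0 := by
        rw [hSD]
        refine Finset.sum_eq_zero fun i _ => Finset.sum_eq_zero fun j _ => ?_
        by_cases hmuj : mu j = 0
        · exact hkill' j hmuj i
        · rcases mul_eq_zero.mp (hterm i j) with h | h
          · rcases mul_eq_zero.mp h with h' | h'
            · rw [h', Real.zero_rpow hαne, zero_mul]
            · exact absurd h' hmuj
          · rw [h, mul_zero]
      rw [hSzero]
      exact mul_nonneg (Real.rpow_nonneg hT0 _) (Real.rpow_nonneg hR0 _)
    · -- T > 0
      set t := R ^ (1-α) * T ^ (α-1) with htdef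
      have htpos : 0 < t := mul_pos (Real.rpow_pos_of_pos hRpos _)
        (Real.rpow_pos_of_pos hTpos _)
      have hstep : ∀ i j, lam i ^ α * D i j
          ≤ (α * (t * (lam i * mu j)) + (1-α) * (t ^ (-(α/(1-α))) * mu j ^ α')) * D i j := by
        intro i j
        by_cases hmuj : mu j = 0
        · rw [hkill' j hmuj i, hmuj]
          have hz : α * (t * (lam i * 0)) + (1-α) * (t ^ (-(α/(1-α))) * (0:ℝ) ^ α') = 0 := by
            rw [Real.zero_rpow hα'ne]; ring
          rw [hz, zero_mul]
        · have hmujpos : 0 < mu j := lt_of_le_of_ne (hmu j) (Ne.symm hmuj)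
          exact mul_le_mul_of_nonneg_right
            (scalar_step hα0 hα1 hα' htpos (hlam i) hmujpos) (hD i j)
      have hRD : ∑ i, ∑ j, mu j ^ α' * D i j = R := by
        rw [Finset.sum_comm]
        refine Finset.sum_congr rfl fun j _ => ?_
        rw [← Finset.mul_sum, hcol j, mul_one]
      have hsum : S ≤ α * t * T + (1-α) * t ^ (-(α/(1-α))) * R := by
        rw [hSD]
        refine le_trans (Finset.sum_le_sum fun i _ =>
          Finset.sum_le_sum fun j _ => hstep i j) (le_of_eq ?_)
        rw [hTdef, ← hRD, Finset.mul_sum, Finset.mul_sum, ← Finset.sum_add_distrib]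
        refine Finset.sum_congr rfl fun i _ => ?_
        rw [Finset.mul_sum, Finset.mul_sum, ← Finset.sum_add_distrib]
        refine Finset.sum_congr rfl fun j _ => ?_
        ring
      refine le_trans hsum (le_of_eq ?_)
      have ht1 : t * T = R ^ (1-α) * T ^ α := by
        rw [htdef, mul_assoc]
        congr 1
        rw [← Real.rpow_add_one hTpos.ne']
        norm_num
      have ht2 : t ^ (-(α/(1-α))) * R = T ^ α * R ^ (1-α) := by
        have hb1 : (1-α) * (-(α/(1-α))) = -α := by
          field_simp
        have hb2 : (α-1) * (-(α/(1-α))) = α := by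
          field_simp
          ring
        rw [htdef, Real.mul_rpow (Real.rpow_nonneg hR0 _) (Real.rpow_nonneg hT0 _),
          ← Real.rpow_mul hR0, ← Real.rpow_mul hT0, hb1, hb2, mul_comm (R ^ (-α)) (T ^ α),
          mul_assoc, ← Real.rpow_add_one hRpos.ne']
        congr 2
        ring
      rw [mul_assoc, ht1, mul_assoc, ht2]
      ring

lemma rpowH_mul_rpowH {σ : Matrix ι ι ℂ} (hσ : σ.PosSemidef) {a b e : ℝ}
    (ha : a ≠ 0) (hb : b ≠ 0) (he : e ≠ 0) (hab : a + b = e) :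
    σ.rpowH a * σ.rpowH b = σ.rpowH e := by
  rw [rpowH_eq hσ.1 a, rpowH_eq hσ.1 b, rpowH_eq hσ.1 e, fc_mul]
  refine congrArg (fc hσ.1) (funext fun i => ?_)
  rcases eq_or_lt_of_le (hσ.eigenvalues_nonneg i) with h0 | hpos
  · rw [← h0, Real.zero_rpow ha, Real.zero_rpow hb, Real.zero_rpow he, zero_mul]
  · rw [← Real.rpow_add hpos, hab]

end RevHolderAux

open RevHolderAux
set_option maxHeartbeats 1000000

/-- reverse weighted Hölder inequality, `α ∈ (0,1)`.
For a positive semidefinite `σ`, `α ∈ (0,1)` with conjugate index `α' = α/(α-1) < 0`,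
and positive semidefinite `X, Y` with `supp σ ⊆ supp Y` (expressed as `ker Y ⊆ ker σ`):
`⟨X, Y⟩_σ ≥ ‖X‖_{α,σ} ‖Y‖_{α',σ}`, negative powers taken on supports
(Moore–Penrose convention). -/
theorem weighted_reverse_holder
    {ι : Type*} [Fintype ι] [DecidableEq ι]
    (σ X Y : Matrix ι ι ℂ)
    (hσ : σ.PosSemidef) (hX : X.PosSemidef) (hY : Y.PosSemidef)
    (hsupp : ∀ v : ι → ℂ, Y.mulVec v = 0 → σ.mulVec v = 0)
    (α : ℝ) (hα0 : 0 < α) (hα1 : α < 1) (α' : ℝ) (hα' : α' = α / (α - 1)) :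
    wNorm α σ X * wNorm α' σ Y ≤ kmsInner σ X Y := by
  have hαne : α ≠ 0 := ne_of_gt hα0
  have hα'neg : α' < 0 := by
    rw [hα']; exact div_neg_of_pos_of_neg hα0 (by linarith)
  have hα'ne : α' ≠ 0 := ne_of_lt hα'neg
  have hcne : (1 / (2*α) : ℝ) ≠ 0 := one_div_ne_zero (mul_ne_zero two_ne_zero hαne)
  have hdne : (1 / (2*α') : ℝ) ≠ 0 := one_div_ne_zero (mul_ne_zero two_ne_zero hα'ne)
  have hab : (1 / (2*α)) + (1 / (2*α')) = (2⁻¹ : ℝ) := by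
    rw [hα']
    have h1 : α - 1 ≠ 0 := by intro h; linarith
    field_simp
    ring
  have hba : (1 / (2*α')) + (1 / (2*α)) = (2⁻¹ : ℝ) := by rw [add_comm]; exact hab
  have hσh : σ.IsHermitian := hσ.1
  have hSh : (σ.rpowH (1 / (2*α))).PosSemidef := rpowH_posSemidef hσ _
  have hSd : (σ.rpowH (1 / (2*α'))).PosSemidef := rpowH_posSemidef hσ _
  have hM : (σ.rpowH (1 / (2*α)) * X * σ.rpowH (1 / (2*α))).PosSemidef := psd_conj hX hSh.1
  have hN : (σ.rpowH (1 / (2*α')) * Y * σ.rpowH (1 / (2*α'))).PosSemidef := psd_conj hY hSd.1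
  -- wNorm in terms of eigenvalues
  have hWX : wNorm α σ X = (∑ i, hM.1.eigenvalues i ^ α) ^ (1/α) := by
    unfold wNorm
    rw [absM_of_posSemidef hM, retr_rpowH hM]
  have hWY : wNorm α' σ Y = (∑ j, hN.1.eigenvalues j ^ α') ^ (1/α') := by
    unfold wNorm
    rw [absM_of_posSemidef hN, retr_rpowH hN]
  -- spectral pictures
  have hMfc : σ.rpowH (1 / (2*α)) * X * σ.rpowH (1 / (2*α)) = fc hM.1 hM.1.eigenvalues :=
    (fc_eigen_self hM.1).symm
  have hNfc : σ.rpowH (1 / (2*α')) * Y * σ.rpowH (1 / (2*α')) = fc hN.1 hN.1.eigenvalues :=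
    (fc_eigen_self hN.1).symm
  have hcd : σ.rpowH (1 / (2*α)) * σ.rpowH (1 / (2*α')) = σ.rpowH (2⁻¹ : ℝ) :=
    rpowH_mul_rpowH hσ hcne hdne (by norm_num) hab
  have hdc : σ.rpowH (1 / (2*α')) * σ.rpowH (1 / (2*α)) = σ.rpowH (2⁻¹ : ℝ) :=
    rpowH_mul_rpowH hσ hdne hcne (by norm_num) hba
  -- trace identification
  have htrace : ((σ.rpowH (1 / (2*α)) * X * σ.rpowH (1 / (2*α)))
        * (σ.rpowH (1 / (2*α')) * Y * σ.rpowH (1 / (2*α')))).trace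
      = (Xᴴ * σ.rpowH (2⁻¹:ℝ) * Y * σ.rpowH (2⁻¹:ℝ)).trace := by
    rw [hX.1]
    simp only [Matrix.mul_assoc]
    rw [← Matrix.mul_assoc (σ.rpowH (1 / (2*α))) (σ.rpowH (1 / (2*α'))), hcd,
      Matrix.trace_mul_comm]
    simp only [Matrix.mul_assoc]
    rw [hdc]
  -- kms as a double sum
  have hkms : kmsInner σ X Y = ∑ i, ∑ j, hM.1.eigenvalues i * hN.1.eigenvalues j *
      Complex.normSq ((star (hM.1.eigenvectorUnitary : Matrix ι ι ℂ)
        * (hN.1.eigenvectorUnitary : Matrix ι ι ℂ)) i j) := by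
    have h2 : (σ.rpowH (1 / (2*α)) * X * σ.rpowH (1 / (2*α))
        * (σ.rpowH (1 / (2*α')) * Y * σ.rpowH (1 / (2*α')))).trace
        = ((∑ i, ∑ j, hM.1.eigenvalues i * hN.1.eigenvalues j *
            Complex.normSq ((star (hM.1.eigenvectorUnitary : Matrix ι ι ℂ)
              * (hN.1.eigenvectorUnitary : Matrix ι ι ℂ)) i j) : ℝ) : ℂ) := by
      conv_lhs => rw [hMfc, hNfc]
      exact trace_fc_mul_fc hM.1 hN.1 _ _
    unfold kmsInner retr
    rw [← htrace, h2, Complex.ofReal_re]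
  -- the kill condition
  have hkill : ∀ j, hN.1.eigenvalues j = 0 → ∀ i, hM.1.eigenvalues i *
      Complex.normSq ((star (hM.1.eigenvectorUnitary : Matrix ι ι ℂ)
        * (hN.1.eigenvectorUnitary : Matrix ι ι ℂ)) i j) = 0 := by
    intro j hj i
    have hNv : (σ.rpowH (1 / (2*α')) * Y * σ.rpowH (1 / (2*α'))) *ᵥ
        (fun k => (hN.1.eigenvectorUnitary : Matrix ι ι ℂ) k j) = 0 := by
      refine (congrArg (fun A : Matrix ι ι ℂ =>
        A *ᵥ (fun k => (hN.1.eigenvectorUnitary : Matrix ι ι ℂ) k j)) hNfc).trans ?_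
      rw [fc_mulVec_col hN.1, hj, Complex.ofReal_zero, zero_smul]
    have h1 : (σ.rpowH (1 / (2*α')) * Y * σ.rpowH (1 / (2*α'))) *ᵥ
        (fun k => (hN.1.eigenvectorUnitary : Matrix ι ι ℂ) k j)
        = σ.rpowH (1 / (2*α')) *ᵥ (Y *ᵥ (σ.rpowH (1 / (2*α')) *ᵥ
          (fun k => (hN.1.eigenvectorUnitary : Matrix ι ι ℂ) k j))) := by
      simp only [Matrix.mulVec_mulVec, Matrix.mul_assoc]
    have hquad : star (σ.rpowH (1 / (2*α')) *ᵥ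
          (fun k => (hN.1.eigenvectorUnitary : Matrix ι ι ℂ) k j)) ⬝ᵥ
        (Y *ᵥ (σ.rpowH (1 / (2*α')) *ᵥ
          (fun k => (hN.1.eigenvectorUnitary : Matrix ι ι ℂ) k j))) = 0 := by
      have h2 : star (fun k => (hN.1.eigenvectorUnitary : Matrix ι ι ℂ) k j) ⬝ᵥ
          ((σ.rpowH (1 / (2*α')) * Y * σ.rpowH (1 / (2*α'))) *ᵥ
            (fun k => (hN.1.eigenvectorUnitary : Matrix ι ι ℂ) k j)) = 0 := by
        rw [hNv, dotProduct_zero]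
      rw [h1] at h2
      rw [Matrix.star_mulVec, hSd.1, ← Matrix.dotProduct_mulVec]
      exact h2
    have hYu : Y *ᵥ (σ.rpowH (1 / (2*α')) *ᵥ
        (fun k => (hN.1.eigenvectorUnitary : Matrix ι ι ℂ) k j)) = 0 :=
      psd_mulVec_eq_zero hY hquad
    have hσu : σ *ᵥ (σ.rpowH (1 / (2*α')) *ᵥ
        (fun k => (hN.1.eigenvectorUnitary : Matrix ι ι ℂ) k j)) = 0 := hsupp _ hYu
    have hSdu : σ.rpowH (1 / (2*α')) *ᵥ (σ.rpowH (1 / (2*α')) *ᵥ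
        (fun k => (hN.1.eigenvectorUnitary : Matrix ι ι ℂ) k j)) = 0 := by
      have h3 : fc hσh hσh.eigenvalues *ᵥ (σ.rpowH (1 / (2*α')) *ᵥ
          (fun k => (hN.1.eigenvectorUnitary : Matrix ι ι ℂ) k j)) = 0 := by
        rw [fc_eigen_self]
        exact hσu
      have h4 := fc_ker_mono hσh
        (f := hσh.eigenvalues) (g := fun i => hσh.eigenvalues i ^ (1/(2*α')))
        (fun i hi => by
          show hσh.eigenvalues i ^ (1/(2*α')) = 0
          rw [hi, Real.zero_rpow hdne]) h3
      rw [← rpowH_eq] at h4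
      exact h4
    have hSdd : fc hσh (fun i => hσh.eigenvalues i ^ (1/(2*α'))
        * hσh.eigenvalues i ^ (1/(2*α'))) *ᵥ
        (fun k => (hN.1.eigenvectorUnitary : Matrix ι ι ℂ) k j) = 0 := by
      rw [← fc_mul, ← rpowH_eq, ← Matrix.mulVec_mulVec]
      exact hSdu
    have hShv : σ.rpowH (1 / (2*α)) *ᵥ
        (fun k => (hN.1.eigenvectorUnitary : Matrix ι ι ℂ) k j) = 0 := by
      have h5 := fc_ker_mono hσh
        (g := fun i => hσh.eigenvalues i ^ (1/(2*α)))
        (fun i hi => by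
          have hi' : hσh.eigenvalues i ^ (1/(2*α')) * hσh.eigenvalues i ^ (1/(2*α')) = 0 := hi
          have he : hσh.eigenvalues i = 0 :=
            (Real.rpow_eq_zero (hσ.eigenvalues_nonneg i) hdne).mp (mul_self_eq_zero.mp hi')
          show hσh.eigenvalues i ^ (1/(2*α)) = 0
          rw [he, Real.zero_rpow hcne]) hSdd
      rw [← rpowH_eq] at h5
      exact h5
    have hMv : (σ.rpowH (1 / (2*α)) * X * σ.rpowH (1 / (2*α))) *ᵥ
        (fun k => (hN.1.eigenvectorUnitary : Matrix ι ι ℂ) k j) = 0 := by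
      rw [← Matrix.mulVec_mulVec, hShv, Matrix.mulVec_zero]
    have h6 : fc hM.1 hM.1.eigenvalues *ᵥ
        (fun k => (hN.1.eigenvectorUnitary : Matrix ι ι ℂ) k j) = 0 := by
      refine (congrArg (fun A : Matrix ι ι ℂ =>
        A *ᵥ (fun k => (hN.1.eigenvectorUnitary : Matrix ι ι ℂ) k j)) hMfc.symm).trans ?_
      exact hMv
    have h8 := (fc_mulVec_eq_zero_iff hM.1 _ _).mp h6 i
    rw [mulVec_col] at h8
    rcases mul_eq_zero.mp h8 with h | h
    · have h9 : hM.1.eigenvalues i = 0 := by exact_mod_cast h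
      rw [h9, zero_mul]
    · have h9 : (star (hM.1.eigenvectorUnitary : Matrix ι ι ℂ)
          * (hN.1.eigenvectorUnitary : Matrix ι ι ℂ)) i j = 0 := h
      rw [h9, map_zero, mul_zero]
  -- doubly stochastic
  have hPP : (star (hM.1.eigenvectorUnitary : Matrix ι ι ℂ)
        * (hN.1.eigenvectorUnitary : Matrix ι ι ℂ))
      * (star (hM.1.eigenvectorUnitary : Matrix ι ι ℂ)
        * (hN.1.eigenvectorUnitary : Matrix ι ι ℂ))ᴴ = 1 :=
    mul_star_unitary (star_mul_self_eigen hM.1) (mul_star_self_eigen hN.1)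
  have hPP' : (star (hM.1.eigenvectorUnitary : Matrix ι ι ℂ)
        * (hN.1.eigenvectorUnitary : Matrix ι ι ℂ))ᴴ
      * (star (hM.1.eigenvectorUnitary : Matrix ι ι ℂ)
        * (hN.1.eigenvectorUnitary : Matrix ι ι ℂ)) = 1 :=
    star_mul_unitary (mul_star_self_eigen hM.1) (star_mul_self_eigen hN.1)
  rw [hWX, hWY, hkms]
  exact reverse_holder_sums hM.1.eigenvalues hN.1.eigenvalues
    (fun i j => Complex.normSq ((star (hM.1.eigenvectorUnitary : Matrix ι ι ℂ)
      * (hN.1.eigenvectorUnitary : Matrix ι ι ℂ)) i j))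
    (fun i => hM.eigenvalues_nonneg i) (fun j => hN.eigenvalues_nonneg j)
    (fun i j => Complex.normSq_nonneg _)
    (fun i => row_sum _ hPP i) (fun j => col_sum _ hPP' j)
    hkill α hα0 hα1 α' hα'

end
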